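/- arXiv:0909.0469 — 6 statements merged into one kernel-verified Lean document; each statement's English description precedes it below -/
import Mathlib

section
/- The sequence a(n) defined by a(1)=a(2)=1 and a(n+2) = (c1*a(n+1) + c2)/(a(n+1)^2 * a(n)) satisfies, for all n ≥ 1, the relation a(n+2)*a(n+1)^2 + a(n+1)^2*a(n) = (2*c1 + c2 + 1)*a(n+1) - c1. -/
theorem stmt_0 {K : Type*} [Field K] (c1 c2 : K) (a : ℕ → K)
    (ha1 : a 1 = 1) (ha2 : a 2 = 1)
    (hne : ∀ n, 1 ≤ n → a n ≠ 0)
    (hrec : ∀ n, 1 ≤ n → a (n + 2) = (c1 * a (n + 1) + c2) / (a (n + 1) ^ 2 * a n)) :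
    ∀ n, 1 ≤ n →
      a (n + 2) * a (n + 1) ^ 2 + a (n + 1) ^ 2 * a n
        = (2 * c1 + c2 + 1) * a (n + 1) - c1 := by
  have key : ∀ n, 1 ≤ n → a (n + 2) * a (n + 1) ^ 2 * a n = c1 * a (n + 1) + c2 := by
    intro n hn
    have h1 := hne n hn
    have h2 := hne (n + 1) (by omega)
    rw [hrec n hn]
    field_simp
  intro n
  induction n with
  | zero => intro h; omega
  | succ m ih =>
    intro _
    rcases Nat.eq_zero_or_pos m with hm | hm
    · subst hm
      have k := key 1 (le_refl 1)
      norm_num at k ⊢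
      rw [ha1, ha2] at k ⊢
      linear_combination k
    · have ihm := ih hm
      have k1 := key m hm
      have k2 := key (m + 1) (by omega)
      have hx := hne (m + 1) (by omega)
      apply mul_right_cancel₀ hx
      linear_combination k2 + a (m + 2) * ihm - k1
end

section
/- Let s(n) be defined by s(1)=s(2)=s(3)=s(4)=1 and s(n)*s(n-4) = c1*s(n-1)*s(n-3) + c2*s(n-2)^2 for n ≥ 5, and assume all s(n) are nonzero. Define a(n) = (s(n+2)*s(n))/s(n+1)^2. Then a(n+2)*a(n+1)^2*a(n) = c1*a(n+1) + c2 for all n ≥ 1. -/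
theorem stmt_1 {K : Type*} [Field K] (c1 c2 : K) (s a : ℕ → K)
    (hs1 : s 1 = 1) (hs2 : s 2 = 1) (hs3 : s 3 = 1) (hs4 : s 4 = 1)
    (hsrec : ∀ n, 5 ≤ n → s n * s (n - 4) = c1 * s (n - 1) * s (n - 3) + c2 * s (n - 2) ^ 2)
    (hsne : ∀ n, 1 ≤ n → s n ≠ 0)
    (hadef : ∀ n, 1 ≤ n → a n = (s (n + 2) * s n) / s (n + 1) ^ 2) :
    ∀ n, 1 ≤ n → a (n + 2) * a (n + 1) ^ 2 * a n = c1 * a (n + 1) + c2 := by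
  intro n hn
  have h0 := hadef n hn
  have h1 := hadef (n + 1) (by omega)
  have h2 := hadef (n + 2) (by omega)
  have hrec := hsrec (n + 4) (by omega)
  have e1 : n + 4 - 4 = n := by omega
  have e2 : n + 4 - 1 = n + 3 := by omega
  have e3 : n + 4 - 3 = n + 1 := by omega
  have e4 : n + 4 - 2 = n + 2 := by omega
  rw [e1, e2, e3, e4] at hrec
  have n0 := hsne n hn
  have n1 := hsne (n + 1) (by omega)
  have n2 := hsne (n + 2) (by omega)
  have n3 := hsne (n + 3) (by omega)
  have n4 := hsne (n + 4) (by omega)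
  rw [h0, h1, h2]
  have : n + 1 + 2 = n + 3 := by ring
  rw [this]
  have : n + 2 + 2 = n + 4 := by ring
  rw [this]
  have : n + 1 + 1 = n + 2 := by ring
  rw [this]
  have : n + 2 + 1 = n + 3 := by ring
  rw [this]
  field_simp
  linear_combination hrec
end

section
/- Define T(n) = a(n+1)^2*a(n)^2 - (2*c1+c2+1)*a(n+1)*a(n) + c1*a(n+1) + c1*a(n) + c2, where a(n) is the sequence with a(1)=a(2)=1 and a(n+2) = (c1*a(n+1)+c2)/(a(n+1)^2*a(n)). Then T(n) = 0 for all n ≥ 1. -/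
theorem stmt_2 {K : Type*} [Field K] (c1 c2 : K) (a : ℕ → K)
    (ha1 : a 1 = 1) (ha2 : a 2 = 1)
    (hne : ∀ n, 1 ≤ n → a n ≠ 0)
    (hrec : ∀ n, 1 ≤ n → a (n + 2) = (c1 * a (n + 1) + c2) / (a (n + 1) ^ 2 * a n)) :
    ∀ n, 1 ≤ n →
      a (n + 1) ^ 2 * a n ^ 2 - (2 * c1 + c2 + 1) * a (n + 1) * a n
        + c1 * a (n + 1) + c1 * a n + c2 = 0 := by
  intro n hn
  induction n, hn using Nat.le_induction with
  | base => rw [ha1, ha2]; ring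
  | succ n hn ih =>
    have hx := hne n hn
    have hy := hne (n + 1) (by omega)
    have hz := hrec n hn
    rw [eq_div_iff (mul_ne_zero (pow_ne_zero 2 hy) hx)] at hz
    have key : a (n + 1) ^ 2 * a n ^ 2 *
        (a (n + 1 + 1) ^ 2 * a (n + 1) ^ 2 - (2 * c1 + c2 + 1) * a (n + 1 + 1) * a (n + 1)
          + c1 * a (n + 1 + 1) + c1 * a (n + 1) + c2) = 0 := by
      linear_combination (c1 * a (n + 1) + c2) * ih +
        (a (n + 2) * a (n + 1) ^ 2 * a n + c1 * a (n + 1) + c2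
          - (2 * c1 + c2 + 1) * a n * a (n + 1) + c1 * a n) * hz
    have h0 : a (n + 1) ^ 2 * a n ^ 2 ≠ 0 :=
      mul_ne_zero (pow_ne_zero 2 hy) (pow_ne_zero 2 hx)
    exact (mul_eq_zero.mp key).resolve_left h0
end

section
/- Let q = c1 + c2 with q ≠ 0 in a field, and define s(n) by s(1)=s(2)=s(3)=1 and s(n) = q^{f(n)} for n ≥ 4 where f(n) = floor((n-3)^2/4). Then s satisfies the order-3 degree-2 recurrence s(n+3)^2*s(n)^2 + c1*s(n+2)^3*s(n) + c2*s(n+2)^2*s(n+1)^2 - ((2*c1+c2+1)*s(n+2)*s(n+1)*s(n) - c1*s(n+1)^3)*s(n+3) = 0 for all n ≥ 1. -/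
theorem stmt_12 {K : Type*} [Field K] (c1 c2 : K) (hq : c1 + c2 ≠ 0) (s : ℕ → K)
    (hs1 : s 1 = 1) (hs2 : s 2 = 1) (hs3 : s 3 = 1)
    (hs : ∀ n, 4 ≤ n → s n = (c1 + c2) ^ ((n - 3) ^ 2 / 4)) :
    ∀ n, 1 ≤ n →
      s (n + 3) ^ 2 * s n ^ 2 + c1 * s (n + 2) ^ 3 * s n + c2 * s (n + 2) ^ 2 * s (n + 1) ^ 2
        - ((2 * c1 + c2 + 1) * s (n + 2) * s (n + 1) * s n - c1 * s (n + 1) ^ 3) * s (n + 3)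
        = 0 := by
  have h4 : s 4 = 1 := by rw [hs 4 (by norm_num)]; norm_num
  have h5 : s 5 = c1 + c2 := by rw [hs 5 (by norm_num)]; norm_num
  have h6 : s 6 = (c1 + c2) ^ 2 := by rw [hs 6 (by norm_num)]; norm_num
  intro n hn
  match n with
  | 1 => simp only [hs1, hs2, hs3, h4]; ring
  | 2 => simp only [hs2, hs3, h4, h5]; ring
  | 3 => simp only [hs3, h4, h5, h6]; ring
  | (j + 4) =>
    rcases Nat.even_or_odd j with ⟨k, hk⟩ | ⟨k, hk⟩
    · subst hk
      have e0 : s (k + k + 4) = (c1+c2)^(k^2+k) := by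
        rw [hs _ (by omega), show k + k + 4 - 3 = 2*k+1 from by omega,
          show (2*k+1)^2 = 1 + 4*(k^2+k) from by ring,
          Nat.add_mul_div_left _ _ (by norm_num : (0:ℕ) < 4)]
        norm_num
      have e1 : s (k + k + 4 + 1) = (c1+c2)^(k^2+k) * (c1+c2)^k * (c1+c2) := by
        rw [hs _ (by omega), show k + k + 4 + 1 - 3 = 2*(k+1) from by omega,
          show (2*(k+1))^2 = 4*(k^2+k+(k+1)) from by ring,
          Nat.mul_div_cancel_left _ (by norm_num : 0 < 4)]
        norm_num [pow_add, pow_mul, mul_assoc]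
      have e2 : s (k + k + 4 + 2) = (c1+c2)^(k^2+k) * ((c1+c2)^k)^2 * (c1+c2)^2 := by
        rw [hs _ (by omega), show k + k + 4 + 2 - 3 = 2*k+3 from by omega,
          show (2*k+3)^2 = 1 + 4*(k^2+k+(k*2+2)) from by ring,
          Nat.add_mul_div_left _ _ (by norm_num : (0:ℕ) < 4)]
        norm_num [pow_add, pow_mul, mul_assoc]
      have e3 : s (k + k + 4 + 3) = (c1+c2)^(k^2+k) * ((c1+c2)^k)^3 * (c1+c2)^4 := by
        rw [hs _ (by omega), show k + k + 4 + 3 - 3 = 2*(k+2) from by omega,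
          show (2*(k+2))^2 = 4*(k^2+k+(k*3+4)) from by ring,
          Nat.mul_div_cancel_left _ (by norm_num : 0 < 4)]
        norm_num [pow_add, pow_mul, mul_assoc]
      rw [e0, e1, e2, e3]; ring
    · subst hk
      have e0 : s (2*k + 1 + 4) = (c1+c2)^(k^2+2*k+1) := by
        rw [hs _ (by omega), show 2*k + 1 + 4 - 3 = 2*(k+1) from by omega,
          show (2*(k+1))^2 = 4*(k^2+2*k+1) from by ring,
          Nat.mul_div_cancel_left _ (by norm_num : 0 < 4)]
      have e1 : s (2*k + 1 + 4 + 1) = (c1+c2)^(k^2+2*k+1) * (c1+c2)^k * (c1+c2) := by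
        rw [hs _ (by omega), show 2*k + 1 + 4 + 1 - 3 = 2*k+3 from by omega,
          show (2*k+3)^2 = 1 + 4*((k^2+2*k+1)+k+1) from by ring,
          Nat.add_mul_div_left _ _ (by norm_num : (0:ℕ) < 4)]
        norm_num [pow_add, pow_mul, mul_assoc]
      have e2 : s (2*k + 1 + 4 + 2) = (c1+c2)^(k^2+2*k+1) * ((c1+c2)^k)^2 * (c1+c2)^3 := by
        rw [hs _ (by omega), show 2*k + 1 + 4 + 2 - 3 = 2*(k+2) from by omega,
          show (2*(k+2))^2 = 4*((k^2+2*k+1)+(k*2+3)) from by ring,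
          Nat.mul_div_cancel_left _ (by norm_num : 0 < 4)]
        norm_num [pow_add, pow_mul, mul_assoc]
      have e3 : s (2*k + 1 + 4 + 3) = (c1+c2)^(k^2+2*k+1) * ((c1+c2)^k)^3 * (c1+c2)^5 := by
        rw [hs _ (by omega), show 2*k + 1 + 4 + 3 - 3 = 2*k+5 from by omega,
          show (2*k+5)^2 = 1 + 4*((k^2+2*k+1)+(k*3+5)) from by ring,
          Nat.add_mul_div_left _ _ (by norm_num : (0:ℕ) < 4)]
        norm_num [pow_add, pow_mul, mul_assoc]
      rw [e0, e1, e2, e3]; ring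
end

section
/- Let s(n) be the generalized Somos-4 sequence: s(1)=...=s(4)=1 and s(n)*s(n-4) = c1*s(n-1)*s(n-3) + c2*s(n-2)^2, with all terms nonzero. Then s satisfies the order-3 quadratic relation s(n+3)^2*s(n)^2 + c1*s(n+2)^3*s(n) + c2*s(n+2)^2*s(n+1)^2 - ((2*c1+c2+1)*s(n+2)*s(n+1)*s(n) - c1*s(n+1)^3)*s(n+3) = 0 for all n ≥ 1. -/
theorem stmt_13 {K : Type*} [Field K] (c1 c2 : K) (s : ℕ → K)
    (hs1 : s 1 = 1) (hs2 : s 2 = 1) (hs3 : s 3 = 1) (hs4 : s 4 = 1)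
    (hsrec : ∀ n, 5 ≤ n → s n * s (n - 4) = c1 * s (n - 1) * s (n - 3) + c2 * s (n - 2) ^ 2)
    (hsne : ∀ n, 1 ≤ n → s n ≠ 0) :
    ∀ n, 1 ≤ n →
      s (n + 3) ^ 2 * s n ^ 2 + c1 * s (n + 2) ^ 3 * s n + c2 * s (n + 2) ^ 2 * s (n + 1) ^ 2
        - ((2 * c1 + c2 + 1) * s (n + 2) * s (n + 1) * s n - c1 * s (n + 1) ^ 3) * s (n + 3)
        = 0 := by
  intro n hn
  induction n, hn using Nat.le_induction with
  | base =>
    norm_num [hs1, hs2, hs3, hs4]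
    ring
  | succ n hn ih =>
    have hrec := hsrec (n + 4) (by omega)
    simp only [show n + 4 - 4 = n from by omega, show n + 4 - 1 = n + 3 from by omega,
      show n + 4 - 3 = n + 1 from by omega, show n + 4 - 2 = n + 2 from by omega] at hrec
    have ha : s n ≠ 0 := hsne n hn
    have key : s n ^ 2 *
        (s (n + 1 + 3) ^ 2 * s (n + 1) ^ 2 + c1 * s (n + 1 + 2) ^ 3 * s (n + 1)
          + c2 * s (n + 1 + 2) ^ 2 * s (n + 1 + 1) ^ 2
          - ((2 * c1 + c2 + 1) * s (n + 1 + 2) * s (n + 1 + 1) * s (n + 1)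
            - c1 * s (n + 1 + 1) ^ 3) * s (n + 1 + 3)) = 0 := by
      simp only [show n + 1 + 3 = n + 4 from by omega, show n + 1 + 2 = n + 3 from by omega,
        show n + 1 + 1 = n + 2 from by omega]
      linear_combination (c1 * s (n + 3) * s (n + 1) + c2 * s (n + 2) ^ 2) * ih
        + (s (n + 1) ^ 2 * (s n * s (n + 4) + c1 * s (n + 3) * s (n + 1) + c2 * s (n + 2) ^ 2)
          - ((2 * c1 + c2 + 1) * s (n + 3) * s (n + 2) * s (n + 1) - c1 * s (n + 2) ^ 3) * s n)
          * hrec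
    rcases mul_eq_zero.mp key with h | h
    · exact absurd h (pow_ne_zero 2 ha)
    · exact h
end

section
/- Over a field of characteristic 0, with q = c1 + c2 ≠ 0 and integers i ≥ 2, k ≥ 0: the quadratic equation X^2*q^{2k} - ((2*c1+c2+1)*q^{3k+3i-2} - c1*q^{3k+3i-3})*X + c1*q^{4k+6i-3} + c2*q^{4k+6i-4} = 0 has exactly the roots X = q^{k+3i-1} and X = q^{k+3i-3}*(c2 + c1*c2 + c1^2). -/
theorem stmt_15 {K : Type*} [Field K] [CharZero K] (c1 c2 : K) (hq : c1 + c2 ≠ 0)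
    (i k : ℕ) (hi : 2 ≤ i) :
    ∀ X : K,
      X ^ 2 * (c1 + c2) ^ (2 * k)
          - ((2 * c1 + c2 + 1) * (c1 + c2) ^ (3 * k + 3 * i - 2)
              - c1 * (c1 + c2) ^ (3 * k + 3 * i - 3)) * X
          + c1 * (c1 + c2) ^ (4 * k + 6 * i - 3) + c2 * (c1 + c2) ^ (4 * k + 6 * i - 4) = 0
        ↔ X = (c1 + c2) ^ (k + 3 * i - 1)
            ∨ X = (c1 + c2) ^ (k + 3 * i - 3) * (c2 + c1 * c2 + c1 ^ 2) := by
  obtain ⟨j, rfl⟩ : ∃ j, i = j + 2 := ⟨i - 2, by omega⟩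
  intro X
  have e1 : 3 * k + 3 * (j + 2) - 2 = 3 * k + 3 * j + 4 := by omega
  have e2 : 3 * k + 3 * (j + 2) - 3 = 3 * k + 3 * j + 3 := by omega
  have e3 : 4 * k + 6 * (j + 2) - 3 = 4 * k + 6 * j + 9 := by omega
  have e4 : 4 * k + 6 * (j + 2) - 4 = 4 * k + 6 * j + 8 := by omega
  have e5 : k + 3 * (j + 2) - 1 = k + 3 * j + 5 := by omega
  have e6 : k + 3 * (j + 2) - 3 = k + 3 * j + 3 := by omega
  rw [e1, e2, e3, e4, e5, e6]
  have key :
      X ^ 2 * (c1 + c2) ^ (2 * k)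
          - ((2 * c1 + c2 + 1) * (c1 + c2) ^ (3 * k + 3 * j + 4)
              - c1 * (c1 + c2) ^ (3 * k + 3 * j + 3)) * X
          + c1 * (c1 + c2) ^ (4 * k + 6 * j + 9) + c2 * (c1 + c2) ^ (4 * k + 6 * j + 8)
      = (c1 + c2) ^ (2 * k) * ((X - (c1 + c2) ^ (k + 3 * j + 5)) *
          (X - (c1 + c2) ^ (k + 3 * j + 3) * (c2 + c1 * c2 + c1 ^ 2))) := by
    ring
  rw [key, mul_eq_zero, mul_eq_zero, sub_eq_zero, sub_eq_zero,
    or_iff_right (pow_ne_zero _ hq)]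
end
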